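/- Let T be a bounded selfadjoint operator on a complex Hilbert space H and let a < b be real numbers. Then the open interval (a, b) is contained in the resolvent set of T if and only if Re⟨(T - a)x, (T - b)x⟩ ≥ 0 for all x ∈ H. -/

import Mathlib

set_option maxHeartbeats 1000000


open scoped InnerProductSpace

theorem stmt2 {H : Type*} [NormedAddCommGroup H] [InnerProductSpace ℂ H]
    [CompleteSpace H] (T : H →L[ℂ] H) (hT : IsSelfAdjoint T)
    (a b : ℝ) (hab : a < b) :
    (∀ t ∈ Set.Ioo a b, (t : ℂ) ∈ resolventSet ℂ T) ↔
      ∀ x : H, 0 ≤ (⟪T x - (a : ℂ) • x, T x - (b : ℂ) • x⟫_ℂ).re := by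
  rcases subsingleton_or_nontrivial H with hH | hH
  · have hsub : Subsingleton (H →L[ℂ] H) :=
      ⟨fun f g => ContinuousLinearMap.ext fun x => Subsingleton.elim _ _⟩
    constructor
    · intro _ x
      have h0 : (⟪T x - (a : ℂ) • x, T x - (b : ℂ) • x⟫_ℂ) = 0 := by
        rw [Subsingleton.elim (T x - (a : ℂ) • x) 0, inner_zero_left]
      rw [h0]
      norm_num
    · intro _ t _
      exact spectrum.mem_resolventSet_iff.mpr (isUnit_of_subsingleton _)
  · have hnt : Nontrivial (H →L[ℂ] H) := by
      obtain ⟨x, hx⟩ := exists_ne (0 : H)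
      exact ⟨1, 0, fun h => hx (by simpa using ContinuousLinearMap.ext_iff.mp h x)⟩
    set A : H →L[ℂ] H := T - (a : ℂ) • 1 with hAdef
    set B : H →L[ℂ] H := T - (b : ℂ) • 1 with hBdef
    have hsmul : ∀ r : ℝ, IsSelfAdjoint ((r : ℂ) • (1 : H →L[ℂ] H)) := by
      intro r
      rw [IsSelfAdjoint, star_smul, star_one, Complex.star_def, Complex.conj_ofReal]
    have hA : IsSelfAdjoint A := hT.sub (hsmul a)
    have hB : IsSelfAdjoint B := hT.sub (hsmul b)
    have hcomm : A * B = B * A := by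
      simp only [hAdef, hBdef, sub_mul, mul_sub, smul_mul_assoc, mul_smul_comm, one_mul,
        mul_one, smul_smul, smul_sub]
      rw [mul_comm (a : ℂ) (b : ℂ)]
      abel
    set S : H →L[ℂ] H := A * B with hSdef
    have hS : IsSelfAdjoint S := by
      rw [IsSelfAdjoint, hSdef, star_mul, hA.star_eq, hB.star_eq, ← hcomm]
    -- spectral mapping
    have hq : spectrum ℂ S = (fun k : ℂ => (k - a) * (k - b)) '' spectrum ℂ T := by
      have h1 : S = Polynomial.aeval T ((Polynomial.X - Polynomial.C (a : ℂ)) *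
          (Polynomial.X - Polynomial.C (b : ℂ))) := by
        simp [hSdef, hAdef, hBdef, Algebra.algebraMap_eq_smul_one]
      rw [h1, spectrum.map_polynomial_aeval]
      ext k
      simp
    -- inner product identity
    have hinner : ∀ x : H, (⟪T x - (a : ℂ) • x, T x - (b : ℂ) • x⟫_ℂ).re
        = (⟪S x, x⟫_ℂ).re := by
      intro x
      have hAx : A x = T x - (a : ℂ) • x := by
        simp [hAdef]
      have hBx : B x = T x - (b : ℂ) • x := by
        simp [hBdef]
      have hSx : S x = A (B x) := rfl
      have hsymm : (⟪A (B x), x⟫_ℂ) = ⟪B x, A x⟫_ℂ :=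
        (ContinuousLinearMap.isSelfAdjoint_iff_isSymmetric.mp hA) (B x) x
      rw [← hAx, ← hBx, hSx, hsymm, ← inner_conj_symm (A x) (B x)]
      exact Complex.conj_re _
    -- positivity reformulation
    have hpos : (∀ x : H, 0 ≤ (⟪T x - (a : ℂ) • x, T x - (b : ℂ) • x⟫_ℂ).re)
        ↔ ∀ s ∈ spectrum ℝ S, 0 ≤ s := by
      rw [← StarOrderedRing.nonneg_iff_spectrum_nonneg (a := S) hS,
        ContinuousLinearMap.nonneg_iff_isPositive]
      constructor
      · intro h
        refine ⟨ContinuousLinearMap.isSelfAdjoint_iff_isSymmetric.mp hS, fun x => ?_⟩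
        have := h x
        rw [hinner x] at this
        simpa [ContinuousLinearMap.reApplyInnerSelf, RCLike.re_to_complex] using this
      · intro h x
        rw [hinner x]
        have := h.2 x
        simpa [ContinuousLinearMap.reApplyInnerSelf, RCLike.re_to_complex] using this
    rw [hpos]
    constructor
    · intro h s hs
      have hsC : (s : ℂ) ∈ spectrum ℂ S := spectrum.algebraMap_mem ℂ hs
      rw [hq] at hsC
      obtain ⟨z, hz, hzs⟩ := hsC
      have hzre : z = (z.re : ℂ) := hT.mem_spectrum_eq_re hz
      set t : ℝ := z.re with htdef
      have hts : ((t - a) * (t - b) : ℝ) = s := by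
        have : ((z - a) * (z - b) : ℂ) = (s : ℂ) := hzs
        rw [hzre] at this
        exact_mod_cast this
      have hnot : t ∉ Set.Ioo a b := by
        intro hmem
        have := h t hmem
        rw [spectrum.mem_resolventSet_iff] at this
        rw [hzre] at hz
        exact (spectrum.notMem_iff.mpr this) hz
      rw [Set.mem_Ioo, not_and_or, not_lt, not_lt] at hnot
      rcases hnot with h1 | h1
      · nlinarith
      · nlinarith
    · intro h t ht
      rw [spectrum.mem_resolventSet_iff, ← spectrum.notMem_iff]
      intro hmem
      have hin : ((( t - a) * (t - b) : ℝ) : ℂ) ∈ spectrum ℂ S := by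
        rw [hq]
        exact ⟨(t : ℂ), hmem, by push_cast; ring⟩
      have hre : ((t - a) * (t - b) : ℝ) ∈ spectrum ℝ S :=
        spectrum.of_algebraMap_mem ℂ hin
      have := h _ hre
      obtain ⟨ht1, ht2⟩ := ht
      nlinarith
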